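/- Let V, Q be Hilbert spaces, b : V × Q → ℝ a continuous bilinear form satisfying the inf-sup condition with constant β > 0 on the full space V, and T : Q → V the supremizer operator with (Tq,v)_V = b(v,q) for all v. Let Q_N ⊆ Q be a subspace and V_N ⊆ V a subspace with Tq ∈ V_N for every q ∈ Q_N. Then b satisfies the inf-sup condition on V_N × Q_N with the same constant β, i.e., for every q ∈ Q_N there exists v ∈ V_N with v ≠ 0 and b(v,q) ≥ β‖q‖_Q‖v‖_V. -/

import Mathlib

theorem stmt_4 {V Q : Type*}
    [NormedAddCommGroup V] [InnerProductSpace ℝ V] [CompleteSpace V]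
    [NormedAddCommGroup Q] [InnerProductSpace ℝ Q] [CompleteSpace Q]
    (b : V →ₗ[ℝ] Q →ₗ[ℝ] ℝ)
    (hbcont : ∃ C : ℝ, ∀ (v : V) (q : Q), |b v q| ≤ C * ‖v‖ * ‖q‖)
    (β : ℝ) (hβ : 0 < β)
    (hinfsup : ∀ q : Q, q ≠ 0 → ∃ v : V, v ≠ 0 ∧ β * ‖q‖ * ‖v‖ ≤ b v q)
    (T : Q → V)
    (hT : ∀ (q : Q) (v : V), (inner ℝ (T q) v : ℝ) = b v q)
    (VN : Submodule ℝ V) (QN : Submodule ℝ Q)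
    (hTN : ∀ q ∈ QN, T q ∈ VN) :
    ∀ q ∈ QN, q ≠ 0 → ∃ v ∈ VN, v ≠ 0 ∧ β * ‖q‖ * ‖v‖ ≤ b v q := by
  intro q hqN hq
  obtain ⟨v, hv0, hv⟩ := hinfsup q hq
  have hle : β * ‖q‖ ≤ ‖T q‖ := by
    have h1 : b v q ≤ ‖T q‖ * ‖v‖ := by
      rw [← hT q v]
      exact (real_inner_le_norm _ _)
    have hvpos : 0 < ‖v‖ := norm_pos_iff.mpr hv0
    have := hv.trans h1
    exact le_of_mul_le_mul_right this hvpos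
  have hTq0 : T q ≠ 0 := by
    intro h
    rw [h, norm_zero] at hle
    have : 0 < β * ‖q‖ := mul_pos hβ (norm_pos_iff.mpr hq)
    linarith
  refine ⟨T q, hTN q hqN, hTq0, ?_⟩
  have : b (T q) q = ‖T q‖ ^ 2 := by
    rw [← hT q (T q), real_inner_self_eq_norm_sq]
  rw [this]
  have hn : 0 ≤ ‖T q‖ := norm_nonneg _
  nlinarith
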